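/- (Proposition 3.2, explicit form) Let U ⊆ ℂ be open and a, μ : U → ℂ holomorphic with μ(w) ≠ 0 and |a(w)| < 1 for all w ∈ U. Define the normal Gauss map τ : U → ℝ⁴ by τ = (1/(1−|a|²))·(1+|a|², a+conj(a), −i(a−conj(a)), 0) (a real vector, with values in the hyperboloid ℍ²), and set η = a'/(conj(μ)(1−|a|²)²). Then the Weingarten equation τ_w = η·conj(μ·W(a,a)) holds componentwise on U, where W(a,a) = (2a, 1+a², i(1−a²), 0), and moreover |η|² = |a'|²/(|μ|²(1−|a|²)⁴), which equals the Gauss curvature K = −(1/λ²)Δ ln λ of the induced metric with λ² = 4|μ|²(1−|a|²)². -/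

import Mathlib

open Complex ComplexConjugate

/-- The Weierstrass vector `W(a,b) = (a+b, 1+ab, i(1-ab), a-b) ∈ ℂ⁴`. -/
noncomputable def W (a b : ℂ) : Fin 4 → ℂ := ![a + b, 1 + a * b, I * (1 - a * b), a - b]

/-- The Wirtinger derivative `g_w = (1/2)(g_u − i g_v)` of a map `g : ℂ → E`. -/
noncomputable def wd {E : Type*} [NormedAddCommGroup E] [NormedSpace ℂ E]
    (g : ℂ → E) (w : ℂ) : E :=
  (2⁻¹ : ℂ) • (fderiv ℝ g w 1 - Complex.I • fderiv ℝ g w Complex.I)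

/-- The Euclidean Laplacian `Δf = f_uu + f_vv` of `f : ℂ → ℝ`, `w = u + iv`. -/
noncomputable def lap (f : ℂ → ℝ) (w : ℂ) : ℝ :=
  fderiv ℝ (fun z => fderiv ℝ f z 1) w 1 +
    fderiv ℝ (fun z => fderiv ℝ f z Complex.I) w Complex.I

/-! ### Auxiliary Wirtinger calculus -/

/-- The real-linear map `v ↦ p v + q (conj v)`. -/
noncomputable def RL (p q : ℂ) : ℂ →L[ℝ] ℂ :=
  p • ContinuousLinearMap.id ℝ ℂ + q • (Complex.conjCLE : ℂ ≃L[ℝ] ℂ).toContinuousLinearMap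

@[simp] lemma RL_apply (p q v : ℂ) : RL p q v = p * v + q * conj v := by
  simp [RL, smul_eq_mul]

/-- The real-linear map `v ↦ (c v).re`. -/
noncomputable def reL (c : ℂ) : ℂ →L[ℝ] ℝ := Complex.reCLM.comp (RL c 0)

@[simp] lemma reL_apply (c v : ℂ) : reL c v = (c * v).re := by simp [reL]

lemma hasRL_of_holo {f : ℂ → ℂ} {z : ℂ} (h : DifferentiableAt ℂ f z) :
    HasFDerivAt f (RL (deriv f z) 0) z := by
  have h1 := (h.hasDerivAt.hasFDerivAt).restrictScalars ℝ
  refine h1.congr_fderiv ?_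
  ext v
  simp [smul_eq_mul, mul_comm]

lemma HasRL.conj {f : ℂ → ℂ} {p q z : ℂ} (h : HasFDerivAt f (RL p q) z) :
    HasFDerivAt (fun x => conj (f x)) (RL (conj q) (conj p)) z := by
  have h1 := ((Complex.conjCLE : ℂ ≃L[ℝ] ℂ).toContinuousLinearMap.hasFDerivAt (x := f z)).comp z h
  refine h1.congr_fderiv ?_
  ext v
  simp [mul_comm]
  ring

lemma HasRL.mul {f g : ℂ → ℂ} {p q r s z : ℂ} (hf : HasFDerivAt f (RL p q) z)
    (hg : HasFDerivAt g (RL r s) z) :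
    HasFDerivAt (fun x => f x * g x)
      (RL (p * g z + f z * r) (q * g z + f z * s)) z := by
  have h1 := hf.mul hg
  refine h1.congr_fderiv ?_
  ext v
  simp [smul_eq_mul]
  ring

lemma HasRL.add {f g : ℂ → ℂ} {p q r s z : ℂ} (hf : HasFDerivAt f (RL p q) z)
    (hg : HasFDerivAt g (RL r s) z) :
    HasFDerivAt (fun x => f x + g x) (RL (p + r) (q + s)) z := by
  have h1 := hf.add hg
  refine h1.congr_fderiv ?_
  ext v; simp; ring

lemma HasRL.sub {f g : ℂ → ℂ} {p q r s z : ℂ} (hf : HasFDerivAt f (RL p q) z)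
    (hg : HasFDerivAt g (RL r s) z) :
    HasFDerivAt (fun x => f x - g x) (RL (p - r) (q - s)) z := by
  have h1 := hf.sub hg
  refine h1.congr_fderiv ?_
  ext v; simp; ring

lemma HasRL.const (k z : ℂ) : HasFDerivAt (fun _ : ℂ => k) (RL 0 0) z := by
  have h1 := hasFDerivAt_const (𝕜 := ℝ) (E := ℂ) k z
  refine h1.congr_fderiv ?_
  ext v; simp

lemma HasRL.const_mul {f : ℂ → ℂ} {p q z : ℂ} (k : ℂ) (hf : HasFDerivAt f (RL p q) z) :
    HasFDerivAt (fun x => k * f x) (RL (k * p) (k * q)) z := by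
  have h1 := (HasRL.const k z).mul hf
  refine h1.congr_fderiv ?_
  ext v; simp; ring

lemma HasRL.inv {f : ℂ → ℂ} {p q z : ℂ} (hf : HasFDerivAt f (RL p q) z) (h0 : f z ≠ 0) :
    HasFDerivAt (fun x => (f x)⁻¹) (RL (-(p / f z ^ 2)) (-(q / f z ^ 2))) z := by
  have h1 := (hasFDerivAt_inv' (𝕜 := ℝ) h0).comp z hf
  refine h1.congr_fderiv ?_
  ext v
  simp [ContinuousLinearMap.mulLeftRight_apply]
  field_simp
  ring

lemma HasRL.re {f : ℂ → ℂ} {p q z : ℂ} (h : HasFDerivAt f (RL p q) z) :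
    HasFDerivAt (fun x => (f x).re) (reL (p + conj q)) z := by
  have h1 := (Complex.reCLM.hasFDerivAt (x := f z)).comp z h
  refine h1.congr_fderiv ?_
  ext v
  simp [Complex.add_re, Complex.mul_re, Complex.conj_re, Complex.conj_im]
  ring

lemma HasReL.log {f : ℂ → ℝ} {c : ℂ} {z : ℂ} (h : HasFDerivAt f (reL c) z) (h0 : 0 < f z) :
    HasFDerivAt (fun x => Real.log (f x)) (reL ((f z : ℂ)⁻¹ * c)) z := by
  have h1 := (Real.hasDerivAt_log h0.ne').comp_hasFDerivAt z h
  refine h1.congr_fderiv ?_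
  ext v
  simp [Complex.mul_re]
  field_simp

lemma HasReL.const_mul {f : ℂ → ℝ} {c : ℂ} {z : ℂ} (t : ℝ) (h : HasFDerivAt f (reL c) z) :
    HasFDerivAt (fun x => t * f x) (reL ((t : ℂ) * c)) z := by
  have h1 := h.const_mul t
  refine h1.congr_fderiv ?_
  ext v
  simp [Complex.mul_re]
  ring

lemma HasReL.const_add {f : ℂ → ℝ} {c : ℂ} {z : ℂ} (t : ℝ) (h : HasFDerivAt f (reL c) z) :
    HasFDerivAt (fun x => t + f x) (reL c) z := by
  have h1 := (hasFDerivAt_const (𝕜 := ℝ) (E := ℂ) t z).add h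
  simpa using h

lemma HasReL.add {f g : ℂ → ℝ} {c d : ℂ} {z : ℂ} (hf : HasFDerivAt f (reL c) z)
    (hg : HasFDerivAt g (reL d) z) :
    HasFDerivAt (fun x => f x + g x) (reL (c + d)) z := by
  have h1 := hf.add hg
  refine h1.congr_fderiv ?_
  ext v
  simp [Complex.add_re, Complex.mul_re]
  ring

lemma wd_RL {g : ℂ → ℂ} {p q w : ℂ} (h : HasFDerivAt g (RL p q) w) : wd g w = p := by
  unfold wd
  rw [h.fderiv]
  simp [smul_eq_mul, Complex.ext_iff]
  constructor <;> ring

lemma wd_pi {n : ℕ} (g : ℂ → Fin n → ℂ) (w : ℂ)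
    (h : ∀ i, DifferentiableAt ℝ (fun z => g z i) w) :
    wd g w = fun i => wd (fun z => g z i) w := by
  unfold wd
  rw [fderiv_pi h]
  funext i
  simp [ContinuousLinearMap.pi_apply]

lemma lap_eq {f : ℂ → ℝ} {c : ℂ → ℂ} {p q w : ℂ}
    (H1 : ∀ᶠ z in nhds w, HasFDerivAt f (reL (c z)) z)
    (H2 : HasFDerivAt c (RL p q) w) : lap f w = 2 * q.re := by
  have ev1 : (fun z => fderiv ℝ f z 1) =ᶠ[nhds w] (fun z => (c z).re) := by
    filter_upwards [H1] with z hz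
    rw [hz.fderiv]; simp
  have evI : (fun z => fderiv ℝ f z Complex.I) =ᶠ[nhds w] (fun z => (c z * Complex.I).re) := by
    filter_upwards [H1] with z hz
    rw [hz.fderiv]; simp
  have d1 : HasFDerivAt (fun z => (c z).re) (reL (p + conj q)) w := HasRL.re H2
  have dI : HasFDerivAt (fun z => (c z * Complex.I).re)
      (reL ((p - conj q) * Complex.I)) w := by
    have hmul : HasFDerivAt (fun z => c z * Complex.I) (RL (p * Complex.I) (q * Complex.I)) w := by
      have h1 := H2.mul_const Complex.I
      refine h1.congr_fderiv ?_
      ext v; simp; ring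
    have h1 := (Complex.reCLM.hasFDerivAt (x := c w * Complex.I)).comp w hmul
    refine h1.congr_fderiv ?_
    ext v
    simp [Complex.add_re, Complex.sub_re, Complex.mul_re, Complex.conj_re, Complex.conj_im,
      Complex.mul_im, Complex.I_re, Complex.I_im]
    ring
  unfold lap
  rw [ev1.fderiv_eq, evI.fderiv_eq, d1.fderiv, dI.fderiv]
  simp [Complex.add_re, Complex.sub_re, Complex.mul_re, Complex.mul_im, Complex.conj_re,
    Complex.conj_im, Complex.I_re, Complex.I_im]
  ring

/-- Proposition 3.2, explicit form: for holomorphic data `a, μ` with `μ ≠ 0`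
and `|a| < 1`, the normal Gauss map `τ = (1/(1−|a|²))·(1+|a|², a+conj a, −i(a−conj a), 0)`
satisfies the Weingarten equation `τ_w = η·conj(μ·W(a,a))` with
`η = a'/(conj μ · (1−|a|²)²)`, and `|η|² = |a'|²/(|μ|²(1−|a|²)⁴)` equals the Gauss
curvature `K = −(1/λ²)Δ ln λ` where `λ² = 4|μ|²(1−|a|²)²`. -/
theorem stmt_3 (U : Set ℂ) (hU : IsOpen U) (a μ : ℂ → ℂ)
    (ha : ∀ w ∈ U, DifferentiableAt ℂ a w) (hμ : ∀ w ∈ U, DifferentiableAt ℂ μ w)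
    (hμ0 : ∀ w ∈ U, μ w ≠ 0) (ha1 : ∀ w ∈ U, ‖a w‖ < 1)
    (τ : ℂ → Fin 4 → ℂ)
    (hτ : ∀ w, τ w = ((1 : ℂ) / (1 - (‖a w‖ : ℂ) ^ 2)) •
      ![1 + (‖a w‖ : ℂ) ^ 2, a w + conj (a w), -I * (a w - conj (a w)), 0])
    (η : ℂ → ℂ)
    (hη : ∀ w, η w = deriv a w / (conj (μ w) * (1 - (‖a w‖ : ℂ) ^ 2) ^ 2))
    (lam : ℂ → ℝ)
    (hlam : ∀ w, lam w =
      Real.sqrt (4 * ‖μ w‖ ^ 2 * (1 - ‖a w‖ ^ 2) ^ 2)) :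
    ∀ w ∈ U,
      wd τ w = η w • (fun i => conj ((μ w • W (a w) (a w)) i)) ∧
      ‖η w‖ ^ 2 =
        ‖deriv a w‖ ^ 2 /
          (‖μ w‖ ^ 2 * (1 - ‖a w‖ ^ 2) ^ 4) ∧
      ‖η w‖ ^ 2 =
        -(1 / (lam w) ^ 2) * lap (fun z => Real.log (lam z)) w := by
  have haOn : AnalyticOnNhd ℂ a U :=
    DifferentiableOn.analyticOnNhd (fun z hz => (ha z hz).differentiableWithinAt) hU
  have hμOn : AnalyticOnNhd ℂ μ U :=
    DifferentiableOn.analyticOnNhd (fun z hz => (hμ z hz).differentiableWithinAt) hU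
  have hda : ∀ z ∈ U, DifferentiableAt ℂ (deriv a) z :=
    fun z hz => (haOn.deriv z hz).differentiableAt
  have hdμ : ∀ z ∈ U, DifferentiableAt ℂ (deriv μ) z :=
    fun z hz => (hμOn.deriv z hz).differentiableAt
  have hcast : ∀ z : ℂ, ((‖a z‖ : ℂ)) ^ 2 = a z * conj (a z) := by
    intro z; rw [← Complex.ofReal_pow, Complex.sq_norm, Complex.mul_conj]
  have hscast : ∀ z : ℂ, (1 : ℂ) - a z * conj (a z) = ((1 - ‖a z‖ ^ 2 : ℝ) : ℂ) := by
    intro z; rw [← hcast z]; push_cast; ring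
  have hRpos : ∀ z ∈ U, 0 < 1 - ‖a z‖ ^ 2 := by
    intro z hz
    nlinarith [ha1 z hz, norm_nonneg (a z)]
  have hsne : ∀ z ∈ U, (1 : ℂ) - a z * conj (a z) ≠ 0 := by
    intro z hz
    rw [hscast z]
    exact_mod_cast (hRpos z hz).ne'
  intro w hw
  have hconjμ : conj (μ w) ≠ 0 := by
    intro h; exact hμ0 w hw (by simpa using congrArg (starRingEnd ℂ) h)
  have hmw : μ w * conj (μ w) ≠ 0 := mul_ne_zero (hμ0 w hw) hconjμ
  have hsw := hsne w hw
  have hRwpos := hRpos w hw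
  -- derivative package at w
  have HA := hasRL_of_holo (ha w hw)
  have HAc := HasRL.conj HA
  have HN := HasRL.mul HA HAc
  have HS := HasRL.sub (HasRL.const 1 w) HN
  have HSinv := HasRL.inv HS hsw
  -- Part 2
  have p2 : ‖η w‖ ^ 2 = ‖deriv a w‖ ^ 2 /
      (‖μ w‖ ^ 2 * (1 - ‖a w‖ ^ 2) ^ 4) := by
    rw [hη w, show (1 : ℂ) - ((‖a w‖ : ℂ)) ^ 2
      = ((1 - ‖a w‖ ^ 2 : ℝ) : ℂ) by push_cast; ring]
    rw [norm_div, norm_mul, norm_pow, Complex.norm_conj, Complex.norm_real, Real.norm_eq_abs, abs_of_pos hRwpos]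
    rw [div_pow, mul_pow]
    ring
  refine ⟨?_, p2, ?_⟩
  · -- Part 1: the Weingarten equation
    have hτf : τ = fun z i => (1 - a z * conj (a z))⁻¹ *
        ![1 + a z * conj (a z), a z + conj (a z), -I * (a z - conj (a z)), 0] i := by
      funext z i
      rw [hτ z]
      simp only [Pi.smul_apply, smul_eq_mul, hcast z, one_div]
    have hdiff : ∀ i : Fin 4, DifferentiableAt ℝ
        (fun z => (1 - a z * conj (a z))⁻¹ *
          ![1 + a z * conj (a z), a z + conj (a z), -I * (a z - conj (a z)), 0] i) w := by
      intro i
      fin_cases i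
      · exact (HasRL.mul HSinv (HasRL.add (HasRL.const 1 w) HN)).differentiableAt
      · exact (HasRL.mul HSinv (HasRL.add HA HAc)).differentiableAt
      · exact (HasRL.mul HSinv (HasRL.const_mul (-I) (HasRL.sub HA HAc))).differentiableAt
      · exact (HasRL.mul HSinv (HasRL.const 0 w)).differentiableAt
    rw [hτf, wd_pi _ w hdiff]
    funext i
    fin_cases i
    · refine (wd_RL (HasRL.mul HSinv (HasRL.add (HasRL.const 1 w) HN))).trans ?_
      simp only [Pi.smul_apply, smul_eq_mul, W, Fin.reduceFinMk, Matrix.cons_val, Matrix.cons_val_zero, map_mul, map_add,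
        map_sub, map_one, map_zero, Complex.conj_conj, Complex.conj_I, hη w, hcast w]
      field_simp
      ring
    · refine (wd_RL (HasRL.mul HSinv (HasRL.add HA HAc))).trans ?_
      simp only [Pi.smul_apply, smul_eq_mul, W, Fin.reduceFinMk, Matrix.cons_val, Matrix.cons_val_one, Matrix.head_cons,
        map_mul, map_add, map_sub, map_one, map_zero, Complex.conj_conj, Complex.conj_I,
        hη w, hcast w]
      field_simp
      ring
    · refine (wd_RL (HasRL.mul HSinv (HasRL.const_mul (-I) (HasRL.sub HA HAc)))).trans ?_
      simp only [Pi.smul_apply, smul_eq_mul, W, Fin.reduceFinMk, Matrix.cons_val, Matrix.cons_val_two, Matrix.tail_cons,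
        Matrix.head_cons, map_mul, map_add, map_sub, map_one, map_zero, Complex.conj_conj,
        Complex.conj_I, hη w, hcast w]
      field_simp
      ring
    · refine (wd_RL (HasRL.mul HSinv (HasRL.const 0 w))).trans ?_
      simp only [Pi.smul_apply, smul_eq_mul, W, Fin.reduceFinMk, Matrix.cons_val, Matrix.cons_val_three, Matrix.tail_cons,
        Matrix.head_cons, map_mul, map_add, map_sub, map_one, map_zero, Complex.conj_conj,
        Complex.conj_I, hη w, hcast w]
      field_simp
      ring
  · -- Part 3: the curvature identity
    have hconjμz : ∀ z ∈ U, conj (μ z) ≠ 0 := by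
      intro z hz h; exact hμ0 z hz (by simpa using congrArg (starRingEnd ℂ) h)
    have hposM : ∀ z ∈ U, 0 < (μ z * conj (μ z)).re := by
      intro z hz
      rw [Complex.mul_conj, Complex.ofReal_re]
      exact Complex.normSq_pos.2 (hμ0 z hz)
    have hposR : ∀ z ∈ U, 0 < (1 - a z * conj (a z)).re := by
      intro z hz
      rw [hscast z, Complex.ofReal_re]
      exact hRpos z hz
    have hre1 : ∀ z : ℂ, (((μ z * conj (μ z)).re : ℝ) : ℂ) = μ z * conj (μ z) := by
      intro z; rw [Complex.mul_conj, Complex.ofReal_re]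
    have hre2 : ∀ z : ℂ, (((1 - a z * conj (a z)).re : ℝ) : ℂ) = 1 - a z * conj (a z) := by
      intro z; rw [hscast z, Complex.ofReal_re, ← hscast z]
    have hloglam : ∀ x ∈ U, Real.log (lam x) =
        Real.log 2 + (2⁻¹ * Real.log ((μ x * conj (μ x)).re)
          + Real.log ((1 - a x * conj (a x)).re)) := by
      intro x hx
      have e1 : (μ x * conj (μ x)).re = ‖μ x‖ ^ 2 := by
        rw [Complex.mul_conj, Complex.ofReal_re, Complex.sq_norm]
      have e2 : (1 - a x * conj (a x)).re = 1 - ‖a x‖ ^ 2 := by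
        rw [hscast x, Complex.ofReal_re]
      have hM : (0:ℝ) < ‖μ x‖ :=
        norm_pos_iff.mpr (hμ0 x hx)
      have hR := hRpos x hx
      rw [hlam x, e1, e2,
        show 4 * ‖μ x‖ ^ 2 * (1 - ‖a x‖ ^ 2) ^ 2
          = (2 * ‖μ x‖ * (1 - ‖a x‖ ^ 2)) ^ 2 by ring,
        Real.sqrt_sq (by positivity),
        Real.log_mul (mul_ne_zero two_ne_zero hM.ne') hR.ne',
        Real.log_mul two_ne_zero hM.ne', Real.log_pow]
      push_cast
      ring
    have hUev : ∀ᶠ z in nhds w, z ∈ U := hU.mem_nhds hw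
    have H1 : ∀ᶠ z in nhds w, HasFDerivAt (fun x => Real.log (lam x))
        (reL ((μ z * conj (μ z))⁻¹ * (conj (μ z) * deriv μ z)
          - 2 * ((1 - a z * conj (a z))⁻¹ * (conj (a z) * deriv a z)))) z := by
      filter_upwards [hUev] with z hz
      obtain ⟨C, Ht, hC⟩ : ∃ C, HasFDerivAt (fun x => Real.log 2
          + (2⁻¹ * Real.log ((μ x * conj (μ x)).re)
            + Real.log ((1 - a x * conj (a x)).re))) (reL C) z ∧
          C = (μ z * conj (μ z))⁻¹ * (conj (μ z) * deriv μ z)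
            - 2 * ((1 - a z * conj (a z))⁻¹ * (conj (a z) * deriv a z)) := by
        have HMz := HasRL.mul (hasRL_of_holo (hμ z hz)) (HasRL.conj (hasRL_of_holo (hμ z hz)))
        have HSz := HasRL.sub (HasRL.const 1 z)
          (HasRL.mul (hasRL_of_holo (ha z hz)) (HasRL.conj (hasRL_of_holo (ha z hz))))
        refine ⟨_, HasReL.const_add (Real.log 2)
          (HasReL.add (HasReL.const_mul 2⁻¹ (HasReL.log (HasRL.re HMz) (hposM z hz)))
            (HasReL.log (HasRL.re HSz) (hposR z hz))), ?_⟩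
        rw [hre1 z, hre2 z]
        push_cast
        simp only [map_add, map_mul, map_sub, map_zero, map_one, Complex.conj_conj]
        ring
      rw [hC] at Ht
      exact Ht.congr_of_eventuallyEq
        (by filter_upwards [hU.mem_nhds hz] with x hx; exact hloglam x hx)
    obtain ⟨P, Q, H2, hQ⟩ : ∃ P Q, HasFDerivAt (fun z =>
        (μ z * conj (μ z))⁻¹ * (conj (μ z) * deriv μ z)
          - 2 * ((1 - a z * conj (a z))⁻¹ * (conj (a z) * deriv a z))) (RL P Q) w ∧
        Q = -2 * (conj (deriv a w) * deriv a w) / ((1 : ℂ) - a w * conj (a w)) ^ 2 := by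
      have HMu := hasRL_of_holo (hμ w hw)
      have HMuc := HasRL.conj HMu
      have HM := HasRL.mul HMu HMuc
      have HMinv := HasRL.inv HM hmw
      have HBμ := HasRL.mul HMuc (hasRL_of_holo (hdμ w hw))
      have HBa := HasRL.mul HAc (hasRL_of_holo (hda w hw))
      refine ⟨_, _, HasRL.sub (HasRL.mul HMinv HBμ) (HasRL.const_mul 2 (HasRL.mul HSinv HBa)), ?_⟩
      try simp only [map_add, map_mul, map_sub, map_zero, map_one, Complex.conj_conj]
      field_simp
      ring
    have hlap := lap_eq H1 H2
    rw [hQ] at hlap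
    have hA' : deriv a w * conj (deriv a w) = ((‖deriv a w‖ ^ 2 : ℝ) : ℂ) := by
      rw [Complex.mul_conj, ← Complex.sq_norm]
    have hfin : (-2 * (conj (deriv a w) * deriv a w)
        / ((1 : ℂ) - a w * conj (a w)) ^ 2).re
        = -2 * ‖deriv a w‖ ^ 2 / (1 - ‖a w‖ ^ 2) ^ 2 := by
      rw [mul_comm (conj (deriv a w)) (deriv a w), hA', hscast w,
        show (-2 * ((‖deriv a w‖ ^ 2 : ℝ) : ℂ)
          / ((1 - ‖a w‖ ^ 2 : ℝ) : ℂ) ^ 2)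
          = ((-2 * ‖deriv a w‖ ^ 2 / (1 - ‖a w‖ ^ 2) ^ 2 : ℝ) : ℂ)
          by push_cast; ring, Complex.ofReal_re]
    rw [hfin] at hlap
    have hlam2 : lam w ^ 2 = 4 * ‖μ w‖ ^ 2 * (1 - ‖a w‖ ^ 2) ^ 2 := by
      rw [hlam w]; exact Real.sq_sqrt (by positivity)
    rw [p2, hlap, hlam2]
    have h1 : ‖μ w‖ ≠ 0 := norm_ne_zero_iff.mpr (hμ0 w hw)
    have h2 : (1 - ‖a w‖ ^ 2) ≠ 0 := hRwpos.ne'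
    field_simp
    ring
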